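/- The generating function D(t) = Σ_{n≥1} M_{n-1} t^n, where M_n are the Motzkin numbers, satisfies 2t·D(t) = 1 - t - sqrt(1 - 2t - 3t²); equivalently D(t) satisfies the algebraic equation t·D(t)² + (t-1)·D(t) + t = 0 with D(0)=0. -/

import Mathlib

/-- Motzkin numbers: `M 0 = 1`, `M (n+1) = M n + ∑_{k=0}^{n-1} M k * M (n-1-k)`. -/
def motzkin : ℕ → ℕ
  | 0 => 1
  | n + 1 => motzkin n + ∑ k ∈ (Finset.range n).attach,
      motzkin k.1 * motzkin (n - 1 - k.1)
decreasing_by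
  all_goals (try exact Nat.lt_succ_self n)
  all_goals (have := Finset.mem_range.mp k.2; omega)

/-- `D(t) = ∑_{n ≥ 1} M_{n-1} t^n` as a formal power series over `ℚ`. -/
noncomputable def D : PowerSeries ℚ :=
  PowerSeries.mk fun m => if m = 0 then 0 else (motzkin (m - 1) : ℚ)

lemma coeff_D (m : ℕ) :
    PowerSeries.coeff m D = if m = 0 then 0 else (motzkin (m - 1) : ℚ) :=
  PowerSeries.coeff_mk _ _

lemma motzkin_rec (n : ℕ) :
    motzkin (n + 1) = motzkin n + ∑ k ∈ Finset.range n,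
      motzkin k * motzkin (n - 1 - k) := by
  rw [motzkin]
  congr 1
  exact Finset.sum_attach (Finset.range n) (fun k => (motzkin k * motzkin (n - 1 - k) : ℕ))

theorem stmt2 :
    PowerSeries.X * D ^ 2 + (PowerSeries.X - 1) * D + PowerSeries.X = 0 := by
  ext n
  simp only [map_add, map_zero, sub_mul, map_sub, one_mul, sq]
  rcases n with _ | _ | n
  · simp [coeff_D]
  · rw [PowerSeries.coeff_succ_X_mul, PowerSeries.coeff_succ_X_mul,
      PowerSeries.coeff_X]
    simp [PowerSeries.coeff_mul, coeff_D, motzkin]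
  · rw [PowerSeries.coeff_succ_X_mul, PowerSeries.coeff_succ_X_mul,
      PowerSeries.coeff_X]
    have hD2 : (PowerSeries.coeff (n + 1)) (D * D)
        = ∑ k ∈ Finset.range n, (motzkin k * motzkin (n - 1 - k) : ℚ) := by
      rw [PowerSeries.coeff_mul, Finset.Nat.sum_antidiagonal_eq_sum_range_succ_mk]
      simp only [coeff_D]
      rw [Finset.sum_range_succ', Finset.sum_range_succ]
      rw [if_pos rfl, zero_mul, add_zero]
      rw [if_pos (Nat.sub_self (n+1)), mul_zero, add_zero]
      refine Finset.sum_congr rfl fun k hk => ?_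
      have hk' := Finset.mem_range.mp hk
      rw [if_neg (by omega), if_neg (by omega)]
      have e2 : n + 1 - (k + 1) - 1 = n - 1 - k := by omega
      have e3 : n - k - 1 = n - 1 - k := by omega
      simp [e2, e3]
    rw [hD2, coeff_D, coeff_D, if_neg (by omega), if_neg (by omega)]
    have h := motzkin_rec n
    have hn : n + 1 + 1 - 1 = n + 1 := by omega
    rw [hn, h, if_neg (by omega)]
    push_cast
    ring
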